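/- For every natural number m, the cubes of the Fibonacci numbers satisfy 2 * (∑_{n=1}^{m} (fib n)³) = 3 * fib (m+1) * (fib (m+2))² − (fib (m+2))³ − 3 * (fib (m+1))³ + 1, where the identity is read in ℤ (equivalently, 2·∑_{n=1}^{m} F_n³ + F_{m+2}³ + 3·F_{m+1}³ = 3·F_{m+1}·F_{m+2}² + 1 in ℕ). -/
import Mathlib

theorem sum_fib_cubes (m : ℕ) :
    2 * (∑ n ∈ Finset.Icc 1 m, (Nat.fib n : ℤ) ^ 3) =
      3 * (Nat.fib (m + 1) : ℤ) * (Nat.fib (m + 2) : ℤ) ^ 2 -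
        (Nat.fib (m + 2) : ℤ) ^ 3 - 3 * (Nat.fib (m + 1) : ℤ) ^ 3 + 1 := by
  induction m with
  | zero => simp
  | succ k ih =>
    rw [Finset.sum_Icc_succ_top (by omega), mul_add, ih]
    have h : (Nat.fib (k + 1 + 2) : ℤ) = Nat.fib (k + 1) + Nat.fib (k + 2) := by
      rw [Nat.fib_add_two]; push_cast; ring
    have h2 : (Nat.fib (k + 1 + 1) : ℤ) = Nat.fib (k + 2) := rfl
    rw [h, h2]; ring
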